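/- Dilogarithm limit of q-Pochhammer: if q = e^{−r} with r → 0+, and z ∈ ℂ ∖ [1,∞), then r · log (z;q)_∞ → −Li₂(z), where (z;q)_∞ = ∏_{k≥0}(1 − z q^k) and Li₂(z) = Σ_{n≥1} z^n/n² (analytically continued by Li₂(z) = −∫₀^z log(1−u)/u du). -/

import Mathlib

/-!
Statement 19: the dilogarithm limit of the q-Pochhammer symbol: for `q = e^{−r}`,
`r → 0+`, and `z ∈ ℂ ∖ [1,∞)`,
`r · log (z;q)_∞ → −Li₂(z)`,
where `(z;q)_∞ = ∏_{k≥0}(1 − z q^k)` and `Li₂` is the dilogarithm, analytically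
continued by `Li₂(z) = −∫₀^z log(1−u)/u du = −∫₀¹ log(1 − sz)/s ds`.

`log (z;q)_∞` is interpreted, as usual for asymptotics of such products, as the
convergent sum `Σ_{k≥0} log(1 − z q^k)` of principal logarithms.
-/

/-- The dilogarithm `Li₂(z) = −∫₀^z log(1−u)/u du`, parametrized along the segment
from `0` to `z`. -/
noncomputable def Li2 (z : ℂ) : ℂ :=
  -∫ s in (0 : ℝ)..1, Complex.log (1 - (s : ℂ) * z) / (s : ℂ)

open Complex MeasureTheory Set Filter

namespace QPD

/-- The basic integrand `t ↦ log (1 - e^{-t} z)`. -/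
noncomputable def F (z : ℂ) (t : ℝ) : ℂ := Complex.log (1 - (Real.exp (-t) : ℂ) * z)

lemma slit (z : ℂ) (hz : ∀ x : ℝ, 1 ≤ x → z ≠ (x : ℂ)) :
    ∀ s : ℝ, s ∈ Icc (0:ℝ) 1 → (1 - (s : ℂ) * z) ∈ Complex.slitPlane := by
  intro s hs
  rw [Complex.mem_slitPlane_iff]
  by_cases him : z.im = 0
  · left
    have hzre : z.re < 1 := by
      by_contra h
      push_neg at h
      exact hz z.re h (by apply Complex.ext <;> simp [him])
    simp only [Complex.sub_re, Complex.one_re, Complex.mul_re, Complex.ofReal_re,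
      Complex.ofReal_im, him, mul_zero, sub_zero, zero_mul]
    rcases eq_or_lt_of_le hs.1 with h0 | h0
    · simp [← h0]
    · nlinarith [hs.2, mul_pos h0 (sub_pos.2 hzre)]
  · rcases eq_or_lt_of_le hs.1 with h0 | h0
    · left; simp [← h0]
    · right
      simp only [Complex.sub_im, Complex.one_im, Complex.mul_im, Complex.ofReal_re,
        Complex.ofReal_im, zero_mul, add_zero, zero_sub, neg_ne_zero]
      exact mul_ne_zero (ne_of_gt h0) him

lemma exists_c (z : ℂ) (hz : ∀ x : ℝ, 1 ≤ x → z ≠ (x : ℂ)) :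
    ∃ c : ℝ, 0 < c ∧ ∀ s : ℝ, s ∈ Icc (0:ℝ) 1 → c ≤ ‖1 - (s : ℂ) * z‖ := by
  have hcont : ContinuousOn (fun s : ℝ => ‖1 - (s : ℂ) * z‖) (Icc 0 1) := by fun_prop
  obtain ⟨s₀, hs₀, hmin⟩ := isCompact_Icc.exists_isMinOn (nonempty_Icc.2 zero_le_one) hcont
  refine ⟨‖1 - (s₀ : ℂ) * z‖, ?_, fun s hs => hmin hs⟩
  rw [norm_pos_iff]
  exact Complex.slitPlane_ne_zero (slit z hz s₀ hs₀)

lemma exp_mem (t : ℝ) (ht : 0 ≤ t) : Real.exp (-t) ∈ Icc (0:ℝ) 1 :=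
  ⟨(Real.exp_pos _).le, Real.exp_le_one_iff.2 (by linarith)⟩

lemma F_hasDerivAt (z : ℂ) (hz : ∀ x : ℝ, 1 ≤ x → z ≠ (x : ℂ)) (t : ℝ) (ht : 0 ≤ t) :
    HasDerivAt (F z)
      (((Real.exp (-t) : ℂ) * z) / (1 - (Real.exp (-t) : ℂ) * z)) t := by
  have h1 : HasDerivAt (fun t : ℝ => Real.exp (-t)) (-Real.exp (-t)) t := by
    simpa [Function.comp_def] using (Real.hasDerivAt_exp (-t)).comp t (hasDerivAt_neg t)
  have h2 : HasDerivAt (fun t : ℝ => ((Real.exp (-t) : ℝ) : ℂ)) (-(Real.exp (-t)) : ℝ) t :=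
    h1.ofReal_comp
  have h3 : HasDerivAt (fun t : ℝ => 1 - (Real.exp (-t) : ℂ) * z)
      ((Real.exp (-t) : ℂ) * z) t := by
    have := (h2.mul_const z).const_sub 1
    convert this using 1
    · rfl
    push_cast
    ring
  exact h3.clog_real (slit z hz _ (exp_mem t ht))

lemma F_deriv_bound (z : ℂ) {c : ℝ} (hc : 0 < c)
    (hcle : ∀ s : ℝ, s ∈ Icc (0:ℝ) 1 → c ≤ ‖1 - (s : ℂ) * z‖) (t : ℝ) (ht : 0 ≤ t) :
    ‖((Real.exp (-t) : ℂ) * z) / (1 - (Real.exp (-t) : ℂ) * z)‖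
      ≤ ‖z‖ / c * Real.exp (-t) := by
  rw [norm_div, norm_mul, Complex.norm_real, Real.norm_eq_abs,
    abs_of_pos (Real.exp_pos _)]
  have hle := hcle _ (exp_mem t ht)
  have hd : (0:ℝ) < ‖1 - (Real.exp (-t) : ℂ) * z‖ := lt_of_lt_of_le hc hle
  rw [div_le_iff₀ hd]
  have h2 : ‖z‖ / c * Real.exp (-t) * c ≤ ‖z‖ / c * Real.exp (-t) * ‖1 - (Real.exp (-t) : ℂ) * z‖ :=
    mul_le_mul_of_nonneg_left hle (by positivity)
  calc Real.exp (-t) * ‖z‖ = ‖z‖ / c * Real.exp (-t) * c := by field_simp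
  _ ≤ _ := h2

lemma F_cont (z : ℂ) (hz : ∀ x : ℝ, 1 ≤ x → z ≠ (x : ℂ)) :
    ContinuousOn (F z) (Ici 0) :=
  fun t ht => ((F_hasDerivAt z hz t ht).continuousAt).continuousWithinAt

lemma exists_M (z : ℂ) (hcont : ContinuousOn (F z) (Ici 0)) :
    ∃ M : ℝ, 0 < M ∧ ∀ t : ℝ, 0 ≤ t → ‖F z t‖ ≤ M * Real.exp (-t) := by
  set T : ℝ := max 1 (Real.log (2 * ‖z‖ + 1)) with hT
  have hT0 : (0:ℝ) < T := lt_of_lt_of_le zero_lt_one (le_max_left _ _)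
  have htail : ∀ t : ℝ, T ≤ t → ‖F z t‖ ≤ (3/2 * ‖z‖ + 1) * Real.exp (-t) := by
    intro t htT
    have hsmall : ‖-((Real.exp (-t) : ℂ) * z)‖ ≤ 1/2 := by
      rw [norm_neg, norm_mul, Complex.norm_real, Real.norm_eq_abs,
        abs_of_pos (Real.exp_pos _)]
      have h1 : Real.exp (Real.log (2 * ‖z‖ + 1)) ≤ Real.exp t :=
        Real.exp_le_exp.2 (le_trans (le_max_right _ _) htT)
      rw [Real.exp_log (by positivity)] at h1
      rw [Real.exp_neg, inv_mul_le_iff₀ (Real.exp_pos _)]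
      have h2 : 2 * ‖z‖ ≤ Real.exp t := by linarith
      linarith [mul_le_mul_of_nonneg_left h2 (by norm_num : (0:ℝ) ≤ 1/2)]
    have hlog := Complex.norm_log_one_add_half_le_self hsmall
    have heq : (1 : ℂ) + -((Real.exp (-t) : ℂ) * z) = 1 - (Real.exp (-t) : ℂ) * z := by ring
    rw [heq] at hlog
    calc ‖F z t‖ ≤ 3/2 * ‖-((Real.exp (-t) : ℂ) * z)‖ := hlog
      _ = 3/2 * ‖z‖ * Real.exp (-t) := by
          rw [norm_neg, norm_mul, Complex.norm_real, Real.norm_eq_abs,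
            abs_of_pos (Real.exp_pos _)]; ring
      _ ≤ (3/2 * ‖z‖ + 1) * Real.exp (-t) := by
          have := (Real.exp_pos (-t)).le; nlinarith
  obtain ⟨t₀, ht₀, hmax⟩ := isCompact_Icc.exists_isMaxOn (nonempty_Icc.2 hT0.le)
    ((hcont.mono (Icc_subset_Ici_self)).norm)
  set B : ℝ := ‖F z t₀‖ with hB
  refine ⟨max (3/2 * ‖z‖ + 1) ((B + 1) * Real.exp T), ?_, ?_⟩
  · have : (0:ℝ) < 3/2 * ‖z‖ + 1 := by positivity
    exact lt_of_lt_of_le this (le_max_left _ _)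
  · intro t ht
    rcases le_or_gt T t with h | h
    · exact le_trans (htail t h)
        (mul_le_mul_of_nonneg_right (le_max_left _ _) (Real.exp_pos _).le)
    · have hmem : t ∈ Icc (0:ℝ) T := ⟨ht, h.le⟩
      have h1 : ‖F z t‖ ≤ B := hmax hmem
      have h2 : B ≤ (B + 1) * Real.exp T * Real.exp (-t) := by
        rw [mul_assoc, ← Real.exp_add]
        have hB0 : 0 ≤ B := norm_nonneg _
        have he : (1:ℝ) ≤ Real.exp (T + -t) := Real.one_le_exp (by linarith)
        nlinarith
      exact le_trans h1 (le_trans h2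
        (mul_le_mul_of_nonneg_right (le_max_right _ _) (Real.exp_pos _).le))

lemma F_integrable (z : ℂ) (hcont : ContinuousOn (F z) (Ici 0)) {M : ℝ}
    (hM : ∀ t : ℝ, 0 ≤ t → ‖F z t‖ ≤ M * Real.exp (-t)) :
    IntegrableOn (F z) (Ioi 0) := by
  have hmeas : AEStronglyMeasurable (F z) (volume.restrict (Ioi 0)) :=
    (hcont.mono Ioi_subset_Ici_self).aestronglyMeasurable measurableSet_Ioi
  have hint : IntegrableOn (fun t : ℝ => M * Real.exp (-(1:ℝ) * t)) (Ioi 0) :=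
    (exp_neg_integrableOn_Ioi 0 one_pos).const_mul M
  refine hint.mono' hmeas ?_
  filter_upwards [ae_restrict_mem measurableSet_Ioi] with t ht
  simpa [neg_one_mul] using hM t (le_of_lt ht)

lemma exp_image : (fun t : ℝ => Real.exp (-t)) '' Ioi 0 = Ioo (0:ℝ) 1 := by
  ext y
  constructor
  · rintro ⟨t, ht, rfl⟩
    exact ⟨Real.exp_pos _, Real.exp_lt_one_iff.2 (by simpa using ht)⟩
  · rintro ⟨hy0, hy1⟩
    refine ⟨-Real.log y, ?_, by simp [Real.exp_log hy0]⟩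
    simpa using Real.log_neg hy0 hy1

lemma Li2_eq (z : ℂ) : -(Li2 z) = ∫ t in Ioi (0:ℝ), F z t := by
  have hderiv : ∀ t ∈ Ioi (0:ℝ), HasDerivWithinAt (fun t : ℝ => Real.exp (-t))
      (-Real.exp (-t)) (Ioi 0) t := by
    intro t _
    have h : HasDerivAt (fun t : ℝ => Real.exp (-t)) (-Real.exp (-t)) t := by
      simpa [Function.comp_def] using (Real.hasDerivAt_exp (-t)).comp t (hasDerivAt_neg t)
    exact h.hasDerivWithinAt
  have hinj : InjOn (fun t : ℝ => Real.exp (-t)) (Ioi 0) := by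
    intro a _ b _ h
    have := Real.exp_injective h
    linarith
  have hcov := integral_image_eq_integral_abs_deriv_smul measurableSet_Ioi hderiv hinj
    (fun s : ℝ => Complex.log (1 - (s : ℂ) * z) / (s : ℂ))
  rw [exp_image] at hcov
  have h1 : -(Li2 z) = ∫ s in Ioo (0:ℝ) 1, Complex.log (1 - (s : ℂ) * z) / (s : ℂ) := by
    rw [Li2, neg_neg, intervalIntegral.integral_of_le zero_le_one,
      ← integral_Ioc_eq_integral_Ioo]
  rw [h1, hcov]
  apply setIntegral_congr_fun measurableSet_Ioi
  intro t ht
  have hne : ((Real.exp (-t) : ℝ) : ℂ) ≠ 0 := by simp [Real.exp_ne_zero]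
  simp only [abs_neg, abs_of_pos (Real.exp_pos (-t)), Complex.real_smul]
  rw [mul_div_cancel₀ _ hne]
  rfl

lemma main_estimate (z : ℂ) {c M : ℝ} (hc : 0 < c)
    (hcd : ∀ t : ℝ, 0 ≤ t → HasDerivAt (F z)
      (((Real.exp (-t) : ℂ) * z) / (1 - (Real.exp (-t) : ℂ) * z)) t)
    (hdb : ∀ t : ℝ, 0 ≤ t → ‖((Real.exp (-t) : ℂ) * z) / (1 - (Real.exp (-t) : ℂ) * z)‖
      ≤ ‖z‖ / c * Real.exp (-t))
    (hM : ∀ t : ℝ, 0 ≤ t → ‖F z t‖ ≤ M * Real.exp (-t))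
    (hcont : ContinuousOn (F z) (Ici 0))
    (hFint : IntegrableOn (F z) (Ioi 0))
    {r : ℝ} (hr : 0 < r) :
    ‖(r:ℂ) * (∑' k : ℕ, F z (r * k)) - ∫ t in Ioi (0:ℝ), F z t‖
      ≤ ‖z‖ / c * r ^ 2 * (1 - Real.exp (-r))⁻¹ := by
  set K : ℝ := ‖z‖ / c with hK
  have hK0 : 0 ≤ K := div_nonneg (norm_nonneg _) hc.le
  have hM0 : 0 ≤ M := by
    have h1 := hM 0 le_rfl
    have h2 := norm_nonneg (F z 0)
    simp only [neg_zero, Real.exp_zero, mul_one] at h1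
    linarith
  set a : ℕ → ℝ := fun k => r * k with ha
  have ha0 : ∀ k : ℕ, 0 ≤ a k := fun k => by positivity
  have hastep : ∀ k : ℕ, a (k + 1) - a k = r := by
    intro k; simp only [ha]; push_cast; ring
  have hale : ∀ k : ℕ, a k ≤ a (k + 1) := fun k => by
    have := hastep k; linarith
  have hexp_pow : ∀ k : ℕ, Real.exp (-a k) = Real.exp (-r) ^ k := by
    intro k
    rw [← Real.exp_nat_mul]
    congr 1
    simp only [ha]; ring
  have her0 : (0:ℝ) ≤ Real.exp (-r) := (Real.exp_pos _).le
  have her1 : Real.exp (-r) < 1 := Real.exp_lt_one_iff.2 (by linarith)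
  have hgeom : Summable (fun k : ℕ => Real.exp (-r) ^ k) :=
    summable_geometric_of_lt_one her0 her1
  have hFi : ∀ k : ℕ, IntervalIntegrable (F z) volume (a k) (a (k + 1)) := by
    intro k
    apply ContinuousOn.intervalIntegrable
    apply hcont.mono
    rw [uIcc_of_le (hale k)]
    exact fun t htt => le_trans (ha0 k) htt.1
  have hMVT : ∀ k : ℕ, ∀ x ∈ Icc (a k) (a (k + 1)),
      ‖F z x - F z (a k)‖ ≤ K * Real.exp (-a k) * (x - a k) := by
    intro k
    apply norm_image_sub_le_of_norm_deriv_le_segment'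
      (f' := fun t => ((Real.exp (-t) : ℂ) * z) / (1 - (Real.exp (-t) : ℂ) * z))
    · intro x hx
      exact (hcd x (le_trans (ha0 k) hx.1)).hasDerivWithinAt
    · intro x hx
      refine le_trans (hdb x (le_trans (ha0 k) hx.1)) ?_
      have : Real.exp (-x) ≤ Real.exp (-a k) := Real.exp_le_exp.2 (by linarith [hx.1])
      exact mul_le_mul_of_nonneg_left this hK0
  have hpiece : ∀ k : ℕ,
      ‖(r:ℂ) * F z (a k) - ∫ t in (a k)..(a (k + 1)), F z t‖
        ≤ K * r ^ 2 * Real.exp (-r) ^ k := by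
    intro k
    have hconst : ∫ _t in (a k)..(a (k + 1)), F z (a k) = (r:ℂ) * F z (a k) := by
      rw [intervalIntegral.integral_const, hastep k, Complex.real_smul]
    rw [← hconst, ← intervalIntegral.integral_sub (intervalIntegrable_const) (hFi k)]
    have hb : ∀ t ∈ Set.uIoc (a k) (a (k + 1)), ‖F z (a k) - F z t‖ ≤ K * Real.exp (-a k) * r := by
      intro t htmem
      rw [uIoc_of_le (hale k)] at htmem
      have htIcc : t ∈ Icc (a k) (a (k + 1)) := ⟨htmem.1.le, htmem.2⟩
      rw [norm_sub_rev]
      refine le_trans (hMVT k t htIcc) ?_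
      have h1 : t - a k ≤ r := by have := hastep k; linarith [htIcc.2]
      have h2 : 0 ≤ K * Real.exp (-a k) := mul_nonneg hK0 (Real.exp_pos _).le
      exact mul_le_mul_of_nonneg_left h1 h2
    refine le_trans (intervalIntegral.norm_integral_le_of_norm_le_const hb) ?_
    rw [hastep k, abs_of_pos hr, hexp_pow k]
    ring_nf
    exact le_refl _
  have hterm_bound : ∀ k : ℕ, ‖(r:ℂ) * F z (a k)‖ ≤ r * M * Real.exp (-r) ^ k := by
    intro k
    rw [norm_mul, Complex.norm_real, Real.norm_eq_abs, abs_of_pos hr]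
    rw [mul_assoc, ← hexp_pow k]
    exact mul_le_mul_of_nonneg_left (hM (a k) (ha0 k)) hr.le
  have hs1 : Summable (fun k : ℕ => (r:ℂ) * F z (a k)) :=
    Summable.of_norm_bounded (hgeom.mul_left (r * M)) hterm_bound
  have hint_bound : ∀ k : ℕ, ‖∫ t in (a k)..(a (k + 1)), F z t‖ ≤ M * Real.exp (-r) ^ k * r := by
    intro k
    have hb : ∀ t ∈ Set.uIoc (a k) (a (k + 1)), ‖F z t‖ ≤ M * Real.exp (-a k) := by
      intro t htmem
      rw [uIoc_of_le (hale k)] at htmem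
      refine le_trans (hM t (le_trans (ha0 k) htmem.1.le)) ?_
      have : Real.exp (-t) ≤ Real.exp (-a k) := Real.exp_le_exp.2 (by linarith [htmem.1.le])
      exact mul_le_mul_of_nonneg_left this hM0
    refine le_trans (intervalIntegral.norm_integral_le_of_norm_le_const hb) ?_
    rw [hastep k, abs_of_pos hr, hexp_pow k]
  have hs2norm : Summable (fun k : ℕ => ‖∫ t in (a k)..(a (k + 1)), F z t‖) :=
    Summable.of_nonneg_of_le (fun k => norm_nonneg _) hint_bound
      (by simpa [mul_comm, mul_assoc, mul_left_comm] using (hgeom.mul_left (M * r)))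
  have hs2 : Summable (fun k : ℕ => ∫ t in (a k)..(a (k + 1)), F z t) :=
    Summable.of_norm hs2norm
  have hHasSum : HasSum (fun k : ℕ => ∫ t in (a k)..(a (k + 1)), F z t)
      (∫ t in Ioi (0:ℝ), F z t) := by
    rw [hasSum_iff_tendsto_nat_of_summable_norm hs2norm]
    have hpart : ∀ n : ℕ, ∑ k ∈ Finset.range n, (∫ t in (a k)..(a (k + 1)), F z t)
        = ∫ t in (0:ℝ)..(a n), F z t := by
      intro n
      have h := intervalIntegral.sum_integral_adjacent_intervals (f := F z) (a := a)
        (n := n) (fun k _ => hFi k)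
      have ha0' : a 0 = 0 := by simp [ha]
      rwa [ha0'] at h
    simp_rw [hpart]
    exact intervalIntegral_tendsto_integral_Ioi 0 hFint
      (tendsto_natCast_atTop_atTop.const_mul_atTop hr)
  have hdiff : (r:ℂ) * (∑' k : ℕ, F z (r * k)) - ∫ t in Ioi (0:ℝ), F z t
      = ∑' k : ℕ, ((r:ℂ) * F z (a k) - ∫ t in (a k)..(a (k + 1)), F z t) := by
    rw [Summable.tsum_sub hs1 hs2, hHasSum.tsum_eq, tsum_mul_left]
  rw [hdiff]
  have hsum_bd : Summable (fun k : ℕ => K * r ^ 2 * Real.exp (-r) ^ k) :=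
    hgeom.mul_left _
  have hnorm_sum : Summable (fun k : ℕ =>
      ‖(r:ℂ) * F z (a k) - ∫ t in (a k)..(a (k + 1)), F z t‖) :=
    Summable.of_nonneg_of_le (fun k => norm_nonneg _) hpiece hsum_bd
  refine le_trans (norm_tsum_le_tsum_norm hnorm_sum) ?_
  refine le_trans (Summable.tsum_le_tsum hpiece hnorm_sum hsum_bd) ?_
  rw [tsum_mul_left, tsum_geometric_of_lt_one her0 her1]

lemma small_r_bound {K r : ℝ} (hK : 0 ≤ K) (hr : 0 < r) (hr1 : r ≤ 1) :
    K * r ^ 2 * (1 - Real.exp (-r))⁻¹ ≤ 2 * K * r := by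
  have h1 : Real.exp (-r) ≤ 1 - r / 2 := by
    have h2 : r + 1 ≤ Real.exp r := Real.add_one_le_exp r
    have h3 : Real.exp (-r) = (Real.exp r)⁻¹ := Real.exp_neg r
    rw [h3]
    rw [inv_le_iff_one_le_mul₀ (Real.exp_pos r)]
    nlinarith [Real.exp_pos r]
  have h4 : r / 2 ≤ 1 - Real.exp (-r) := by linarith
  have h5 : (0:ℝ) < r / 2 := by linarith
  have h6 : (1 - Real.exp (-r))⁻¹ ≤ (r / 2)⁻¹ := by
    apply inv_anti₀ h5 h4
  calc K * r ^ 2 * (1 - Real.exp (-r))⁻¹ ≤ K * r ^ 2 * (r / 2)⁻¹ := by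
        apply mul_le_mul_of_nonneg_left h6 (by positivity)
    _ = 2 * K * r := by field_simp
  
end QPD

theorem qPochhammer_dilog_asymptotics (z : ℂ)
    (hz : ∀ x : ℝ, 1 ≤ x → z ≠ (x : ℂ)) :
    Filter.Tendsto
      (fun r : ℝ => (r : ℂ) * ∑' k : ℕ, Complex.log (1 - z * Complex.exp (-(r : ℂ)) ^ k))
      (nhdsWithin 0 (Set.Ioi 0)) (nhds (-(Li2 z))) := by
  classical
  obtain ⟨c, hc, hcle⟩ := QPD.exists_c z hz
  have hcont := QPD.F_cont z hz
  obtain ⟨M, hM0, hM⟩ := QPD.exists_M z hcont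
  have hFint := QPD.F_integrable z hcont hM
  have hcd := QPD.F_hasDerivAt z hz
  have hdb := QPD.F_deriv_bound z hc hcle
  set G : ℝ → ℂ :=
    fun r : ℝ => (r : ℂ) * ∑' k : ℕ, Complex.log (1 - z * Complex.exp (-(r : ℂ)) ^ k) with hG
  set I : ℂ := ∫ t in Set.Ioi (0:ℝ), QPD.F z t with hI
  -- termwise identification for r > 0
  have hterm : ∀ r : ℝ, ∀ k : ℕ,
      Complex.log (1 - z * Complex.exp (-(r : ℂ)) ^ k) = QPD.F z (r * k) := by
    intro r k
    have h1 : Complex.exp (-(r : ℂ)) ^ k = ((Real.exp (-(r * k)) : ℝ) : ℂ) := by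
      rw [show -(r:ℂ) = ((-r : ℝ) : ℂ) by push_cast; ring, ← Complex.ofReal_exp,
        ← Complex.ofReal_pow, ← Real.exp_nat_mul]
      congr 1
      push_cast
      ring
    rw [h1, QPD.F, mul_comm]
  have hGeq : ∀ r : ℝ, G r = (r:ℂ) * ∑' k : ℕ, QPD.F z (r * k) := by
    intro r
    simp only [hG]
    congr 1
    exact tsum_congr (hterm r)
  -- the difference tends to zero
  have hdiff : Filter.Tendsto (fun r : ℝ => G r - I)
      (nhdsWithin 0 (Set.Ioi 0)) (nhds 0) := by
    apply squeeze_zero_norm' (a := fun r : ℝ => 2 * (‖z‖ / c) * r)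
    · filter_upwards [Ioc_mem_nhdsGT zero_lt_one] with r hr
      rw [hGeq r]
      refine le_trans (QPD.main_estimate z hc hcd hdb hM hcont hFint hr.1) ?_
      exact QPD.small_r_bound (div_nonneg (norm_nonneg _) hc.le) hr.1 hr.2
    · have hcont2 : Continuous (fun r : ℝ => 2 * (‖z‖ / c) * r) :=
        continuous_const.mul continuous_id
      have h : Filter.Tendsto (fun r : ℝ => 2 * (‖z‖ / c) * r) (nhds 0) (nhds 0) := by
        simpa using hcont2.tendsto (0:ℝ)
      exact h.mono_left nhdsWithin_le_nhds
  have := hdiff.add (tendsto_const_nhds (x := I))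
  simp only [zero_add] at this
  have heq : (fun r : ℝ => G r - I + I) = G := by
    funext r; ring
  rw [heq] at this
  rw [QPD.Li2_eq z, ← hI]
  exact this
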